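/- Let λ > 0 and f ∈ Ω_λ. Then |f'(z) - 1| ≤ 2λ|z| for all z in the unit disk; in particular f'(z) ≠ 0 and f is univalent in the disk |z| < 1/(2λ). -/

import Mathlib

open Metric Complex

theorem stmt_14 (lam : ℝ) (hlam : 0 < lam) (f : ℂ → ℂ)
    (hf : DifferentiableOn ℂ f (ball (0:ℂ) 1))
    (hf0 : f 0 = 0) (hf1 : deriv f 0 = 1)
    (hΩ : ∀ z ∈ ball (0:ℂ) 1, ‖z * deriv f z - f z‖ < lam) :
    (∀ z ∈ ball (0:ℂ) 1, ‖deriv f z - 1‖ ≤ 2 * lam * ‖z‖) ∧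
    Set.InjOn f (ball (0:ℂ) 1 ∩ ball (0:ℂ) (1 / (2 * lam))) := by
  have h0 : (0:ℂ) ∈ ball (0:ℂ) 1 := by simp
  set g : ℂ → ℂ := fun z => z * deriv f z - f z with hg_def
  have hfa : AnalyticOnNhd ℂ f (ball 0 1) := hf.analyticOnNhd isOpen_ball
  have hda : AnalyticOnNhd ℂ (deriv f) (ball 0 1) := hfa.deriv
  have hg_diff : DifferentiableOn ℂ g (ball 0 1) :=
    (differentiableOn_id.mul hda.differentiableOn).sub hf
  have hg0 : g 0 = 0 := by simp [hg_def, hf0]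
  have hgd0 : deriv g 0 = 0 := by
    have h1 : HasDerivAt (fun z : ℂ => z * deriv f z)
        (1 * deriv f 0 + 0 * deriv (deriv f) 0) 0 :=
      (hasDerivAt_id 0).mul ((hda 0 h0).differentiableAt.hasDerivAt)
    have h2 : HasDerivAt f (deriv f 0) 0 := (hfa 0 h0).differentiableAt.hasDerivAt
    have h3 : HasDerivAt g (1 * deriv f 0 + 0 * deriv (deriv f) 0 - deriv f 0) 0 := h1.sub h2
    simpa using h3.deriv
  set h1 : ℂ → ℂ := dslope g 0 with hh1
  have hh10 : h1 0 = 0 := by simp [hh1, dslope_same, hgd0]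
  have hh1ne : ∀ z : ℂ, z ≠ 0 → h1 z = g z / z := by
    intro z hz
    rw [hh1, dslope_of_ne _ hz, slope_def_field, hg0, sub_zero, sub_zero]
  have hb1 : ∀ z ∈ ball (0:ℂ) 1, ‖h1 z‖ ≤ lam := by
    intro z hz
    have hmaps : Set.MapsTo g (ball 0 1) (ball (g 0) lam) := by
      intro u hu
      rw [hg0, mem_ball, dist_eq_norm, sub_zero]
      exact hΩ u hu
    simpa using Complex.norm_dslope_le_div_of_mapsTo_ball hg_diff (hmaps.mono_right ball_subset_closedBall) hz
  have hh1_diff : DifferentiableOn ℂ h1 (ball 0 1) := by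
    intro z hz
    rcases eq_or_ne z 0 with rfl | hne
    · obtain ⟨p, hp⟩ := hg_diff.analyticOnNhd isOpen_ball 0 h0
      exact (AnalyticAt.differentiableAt
        ⟨_, hp.has_fpower_series_dslope_fslope⟩).differentiableWithinAt
    · exact (differentiableWithinAt_dslope_of_ne hne).mpr (hg_diff z hz)
  set h2 : ℂ → ℂ := dslope h1 0 with hh2
  have hb2 : ∀ z ∈ ball (0:ℂ) 1, ‖h2 z‖ ≤ lam := by
    intro z hz
    refine le_of_forall_pos_le_add fun ε hε => ?_
    have hmaps2 : Set.MapsTo h1 (ball 0 1) (ball (h1 0) (lam + ε)) := by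
      intro u hu
      rw [hh10, mem_ball, dist_eq_norm, sub_zero]
      exact lt_of_le_of_lt (hb1 u hu) (by linarith)
    simpa using Complex.norm_dslope_le_div_of_mapsTo_ball hh1_diff (hmaps2.mono_right ball_subset_closedBall) hz
  have hh2ne : ∀ z : ℂ, z ≠ 0 → h2 z = g z / z ^ 2 := by
    intro z hz
    rw [hh2, dslope_of_ne _ hz, slope_def_field, hh10, sub_zero, sub_zero, hh1ne z hz,
      div_div, ← sq]
  set F : ℂ → ℂ := dslope f 0 with hF
  have hF0 : F 0 = 1 := by simp [hF, dslope_same, hf1]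
  have hFne : ∀ z : ℂ, z ≠ 0 → F z = f z / z := by
    intro z hz
    rw [hF, dslope_of_ne _ hz, slope_def_field, hf0, sub_zero, sub_zero]
  have hF_diff : DifferentiableOn ℂ F (ball 0 1) := by
    intro z hz
    rcases eq_or_ne z 0 with rfl | hne
    · obtain ⟨p, hp⟩ := hfa 0 h0
      exact (AnalyticAt.differentiableAt
        ⟨_, hp.has_fpower_series_dslope_fslope⟩).differentiableWithinAt
    · exact (differentiableWithinAt_dslope_of_ne hne).mpr (hf z hz)
  have hkey : ∀ z ∈ ball (0:ℂ) 1, z ≠ 0 → HasDerivAt F (h2 z) z := by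
    intro z hz hne
    have hfz : HasDerivAt f (deriv f z) z := (hfa z hz).differentiableAt.hasDerivAt
    have hinv : HasDerivAt (fun w : ℂ => w⁻¹) (-(z ^ 2)⁻¹) z := by
      simpa using hasDerivAt_inv hne
    have hd : HasDerivAt (fun w => f w * w⁻¹)
        (deriv f z * z⁻¹ + f z * (-(z ^ 2)⁻¹)) z := hfz.mul hinv
    have heq : (fun w => f w * w⁻¹) =ᶠ[nhds z] F := by
      filter_upwards [isOpen_ne.mem_nhds hne] with w hw
      rw [hFne w hw, div_eq_mul_inv]
    have hd2 := hd.congr_of_eventuallyEq heq.symm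
    refine hd2.congr_deriv (Eq.symm ?_)
    rw [hh2ne z hne, hg_def]
    field_simp
    ring
  have hFd : ∀ z ∈ ball (0:ℂ) 1, HasDerivAt F (h2 z) z := by
    intro z hz
    rcases eq_or_ne z 0 with rfl | hne
    · have hFa : AnalyticAt ℂ F 0 := by
        obtain ⟨p, hp⟩ := hfa 0 h0
        exact ⟨_, hp.has_fpower_series_dslope_fslope⟩
      have hF' : HasDerivAt F (deriv F 0) 0 := hFa.differentiableAt.hasDerivAt
      have hcontF : ContinuousAt (deriv F) 0 :=
        ((hF_diff.analyticOnNhd isOpen_ball).deriv 0 h0).continuousAt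
      have hh2a : AnalyticAt ℂ h2 0 := by
        obtain ⟨p, hp⟩ := hh1_diff.analyticOnNhd isOpen_ball 0 h0
        exact ⟨_, hp.has_fpower_series_dslope_fslope⟩
      have hcont2 : ContinuousAt h2 0 := hh2a.continuousAt
      have hev : deriv F =ᶠ[nhdsWithin (0:ℂ) {(0:ℂ)}ᶜ] h2 := by
        filter_upwards [eventually_nhdsWithin_of_eventually_nhds
          (isOpen_ball.eventually_mem h0), self_mem_nhdsWithin] with w hw hw'
        exact (hkey w hw hw').deriv
      have t1 : Filter.Tendsto (deriv F) (nhdsWithin (0:ℂ) {(0:ℂ)}ᶜ) (nhds (deriv F 0)) :=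
        hcontF.tendsto.mono_left nhdsWithin_le_nhds
      have t2 : Filter.Tendsto (deriv F) (nhdsWithin (0:ℂ) {(0:ℂ)}ᶜ) (nhds (h2 0)) :=
        (hcont2.tendsto.mono_left nhdsWithin_le_nhds).congr' hev.symm
      have heqd : deriv F 0 = h2 0 := tendsto_nhds_unique t1 t2
      exact heqd ▸ hF'
    · exact hkey z hz hne
  have hFbound : ∀ z ∈ ball (0:ℂ) 1, ‖F z - 1‖ ≤ lam * ‖z‖ := by
    intro z hz
    have := (convex_ball (0:ℂ) 1).norm_image_sub_le_of_norm_hasDerivWithin_le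
      (fun w hw => (hFd w hw).hasDerivWithinAt) hb2 h0 hz
    simpa [hF0] using this
  have part1 : ∀ z ∈ ball (0:ℂ) 1, ‖deriv f z - 1‖ ≤ 2 * lam * ‖z‖ := by
    intro z hz
    rcases eq_or_ne z 0 with rfl | hne
    · simp [hf1]
    · have hid : deriv f z - 1 = z * h2 z + (F z - 1) := by
        rw [hh2ne z hne, hFne z hne, hg_def]
        field_simp
        ring
      rw [hid]
      calc ‖z * h2 z + (F z - 1)‖ ≤ ‖z * h2 z‖ + ‖F z - 1‖ := norm_add_le _ _
        _ ≤ ‖z‖ * lam + lam * ‖z‖ := by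
            refine add_le_add ?_ (hFbound z hz)
            rw [norm_mul]
            exact mul_le_mul_of_nonneg_left (hb2 z hz) (norm_nonneg z)
        _ = 2 * lam * ‖z‖ := by ring
  refine ⟨part1, ?_⟩
  intro z hz w hw hfzw
  by_contra hne
  have hz1 : ‖z‖ < 1 := by simpa [mem_ball, dist_eq_norm] using hz.1
  have hw1 : ‖w‖ < 1 := by simpa [mem_ball, dist_eq_norm] using hw.1
  have hz2 : ‖z‖ < 1 / (2 * lam) := by simpa [mem_ball, dist_eq_norm] using hz.2
  have hw2 : ‖w‖ < 1 / (2 * lam) := by simpa [mem_ball, dist_eq_norm] using hw.2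
  set r : ℝ := max ‖z‖ ‖w‖ with hr
  have hr1 : r < 1 := max_lt hz1 hw1
  have hlam2 : (0:ℝ) < 2 * lam := by linarith
  have hr2 : 2 * lam * r < 1 := by
    have hrlt : r < 1 / (2 * lam) := max_lt hz2 hw2
    calc 2 * lam * r < 2 * lam * (1 / (2 * lam)) := by
          exact mul_lt_mul_of_pos_left hrlt hlam2
      _ = 1 := by field_simp
  have hseg : segment ℝ z w ⊆ closedBall (0:ℂ) r :=
    (convex_closedBall (0:ℂ) r).segment_subset
      (by simp [mem_closedBall, dist_eq_norm]; exact le_max_left _ _)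
      (by simp [mem_closedBall, dist_eq_norm]; exact le_max_right _ _)
  have hsub : segment ℝ z w ⊆ ball (0:ℂ) 1 := by
    intro u hu
    have := hseg hu
    rw [mem_closedBall, dist_eq_norm, sub_zero] at this
    rw [mem_ball, dist_eq_norm, sub_zero]
    exact lt_of_le_of_lt this hr1
  have key : ∀ u ∈ segment ℝ z w,
      HasDerivWithinAt (fun u => f u - u) (deriv f u - 1) (segment ℝ z w) u := by
    intro u hu
    exact (((hfa u (hsub hu)).differentiableAt.hasDerivAt).sub
      (hasDerivAt_id u)).hasDerivWithinAt
  have bnd : ∀ u ∈ segment ℝ z w, ‖deriv f u - 1‖ ≤ 2 * lam * r := by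
    intro u hu
    refine (part1 u (hsub hu)).trans ?_
    have hur : ‖u‖ ≤ r := by
      have := hseg hu
      rwa [mem_closedBall, dist_eq_norm, sub_zero] at this
    exact mul_le_mul_of_nonneg_left hur hlam2.le
  have hmvt := (convex_segment z w).norm_image_sub_le_of_norm_hasDerivWithin_le key bnd
    (left_mem_segment ℝ z w) (right_mem_segment ℝ z w)
  rw [hfzw] at hmvt
  have hzw : ‖z - w‖ ≤ 2 * lam * r * ‖z - w‖ := by
    have e1 : f w - w - (f w - z) = z - w := by ring
    rw [e1] at hmvt
    calc ‖z - w‖ ≤ 2 * lam * r * ‖w - z‖ := hmvt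
      _ = 2 * lam * r * ‖z - w‖ := by rw [norm_sub_rev]
  have hpos : 0 < ‖z - w‖ := by
    rw [norm_pos_iff, sub_ne_zero]
    exact fun h => hne (by rw [h])
  nlinarith
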